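/- Let n ≥ 2 be an integer, p ≥ 7 a prime with p ≡ 1 (mod n), and k an integer with 0 ≤ k ≤ (p-1)/n. Then there exist a_1, a_2, a_3 ∈ ℤ_p (depending only on n and k) such that for every t ∈ pℤ_p one has (1/n + t)_k / (1 - t)_k ≡ ((1/n)_k / k!) · (1 + a_1 t + a_2 t^2 + a_3 t^3) (mod p^4) in ℤ_p. -/

import Mathlib

/-- Rising factorial (Pochhammer symbol) `(a)_k = a(a+1)⋯(a+k-1)` in `ℚ_p`. -/
noncomputable def rf {p : ℕ} [Fact p.Prime] (a : ℚ_[p]) (k : ℕ) : ℚ_[p] :=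
  ∏ j ∈ Finset.range k, (a + (j : ℚ_[p]))

open Polynomial Finset

variable {p : ℕ} [Fact p.Prime]

private lemma isUnit_of_not_dvd {x : ℤ_[p]} (h : ¬ (p : ℤ_[p]) ∣ x) : IsUnit x := by
  rw [PadicInt.isUnit_iff]
  refine le_antisymm (PadicInt.norm_le_one x) ?_
  by_contra hlt
  push_neg at hlt
  exact h ((PadicInt.norm_lt_one_iff_dvd x).1 hlt)

private lemma pdvd_natCast {m : ℕ} (h : (p : ℤ_[p]) ∣ (m : ℤ_[p])) : p ∣ m := by
  have h1 : ‖(m : ℤ_[p])‖ < 1 := (PadicInt.norm_lt_one_iff_dvd _).2 h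
  rw [show ((m : ℕ) : ℤ_[p]) = ((m : ℤ) : ℤ_[p]) by push_cast; rfl,
    PadicInt.norm_int_lt_one_iff_dvd] at h1
  exact_mod_cast h1

private lemma isUnit_natCast' {m : ℕ} (h : ¬ p ∣ m) : IsUnit (m : ℤ_[p]) :=
  isUnit_of_not_dvd fun hd => h (pdvd_natCast hd)

/-- For an integer `n ≥ 2`, a prime `p ≥ 7` with `p ≡ 1 (mod n)`, and
`0 ≤ k ≤ (p-1)/n`, there exist `a₁, a₂, a₃ ∈ ℤ_p` (depending only on `n` and `k`)
such that for every `t ∈ pℤ_p`,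
`(1/n + t)_k / (1 - t)_k ≡ ((1/n)_k / k!) · (1 + a₁ t + a₂ t² + a₃ t³) (mod p⁴)`
in `ℤ_p`. -/
theorem stmt5 (n p : ℕ) [Fact p.Prime] (hn : 2 ≤ n) (hp : 7 ≤ p) (hpn : p % n = 1)
    (k : ℕ) (hk : k ≤ (p - 1) / n) :
    ∃ a₁ a₂ a₃ : ℤ_[p], ∀ t : ℚ_[p], (∃ s : ℤ_[p], t = (p : ℚ_[p]) * s) →
      ∃ z : ℤ_[p],
        rf (1 / (n : ℚ_[p]) + t) k / rf (1 - t) k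
          - (rf (1 / (n : ℚ_[p])) k / (k.factorial : ℚ_[p])) *
              (1 + (a₁ : ℚ_[p]) * t + (a₂ : ℚ_[p]) * t ^ 2 + (a₃ : ℚ_[p]) * t ^ 3)
        = (p : ℚ_[p]) ^ 4 * (z : ℚ_[p]) := by
  have hppr := (inferInstance : Fact p.Prime).out
  have hn0 : 0 < n := by omega
  have hdm : n * (p / n) + 1 = p := by
    have := Nat.div_add_mod p n; omega
  have hq1 : 1 ≤ p / n := by
    rcases Nat.eq_zero_or_pos (p / n) with h | h
    · rw [h, Nat.mul_zero] at hdm; omega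
    · exact h
  have hnp : n < p := by
    have : n * 1 ≤ n * (p / n) := Nat.mul_le_mul_left n hq1
    omega
  have hnk : n * k ≤ p - 1 := by
    calc n * k ≤ n * ((p - 1) / n) := Nat.mul_le_mul_left n hk
    _ ≤ p - 1 := Nat.mul_div_le _ _
  have hkp : k < p := by
    have : 2 * k ≤ n * k := Nat.mul_le_mul_right k hn
    omega
  -- units
  have hnu : IsUnit ((n : ℕ) : ℤ_[p]) := isUnit_natCast' (fun hd => by
    have := Nat.le_of_dvd hn0 hd; omega)
  obtain ⟨u, hu⟩ := hnu.exists_right_inv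
  have hkfu : IsUnit ((k.factorial : ℕ) : ℤ_[p]) := isUnit_natCast' (fun hd => by
    have := (Nat.Prime.dvd_factorial hppr).1 hd; omega)
  obtain ⟨vk, hvk⟩ := hkfu.exists_right_inv
  have hjunit : ∀ j ∈ range k, IsUnit (u + (j : ℤ_[p])) := by
    intro j hj
    have hj' : j < k := mem_range.1 hj
    have h1 : u + (j : ℤ_[p]) = u * ((1 + n * j : ℕ) : ℤ_[p]) := by
      push_cast
      linear_combination (-(j : ℤ_[p])) * hu
    rw [h1]
    have hnj : 1 + n * j < p := by
      have h2 : n * (j + 1) ≤ n * k := Nat.mul_le_mul_left n (by omega)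
      rw [Nat.mul_succ] at h2
      omega
    exact (IsUnit.of_mul_eq_one (a := u) (n : ℤ_[p]) (by linear_combination hu)).mul
      (isUnit_natCast' (fun hd => by have := Nat.le_of_dvd (by omega) hd; omega))
  -- polynomials
  obtain ⟨C₀, hC0def⟩ : ∃ c : ℤ_[p], c = ∏ j ∈ range k, (u + (j : ℤ_[p])) := ⟨_, rfl⟩
  have hC0u : IsUnit C₀ := hC0def ▸ Finset.prod_induction _ IsUnit
    (fun a b ha hb => ha.mul hb) isUnit_one hjunit
  obtain ⟨A, hAdef⟩ : ∃ a : ℤ_[p], a = vk * C₀ := ⟨_, rfl⟩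
  have hAu : IsUnit A := hAdef ▸ (IsUnit.of_mul_eq_one (a := vk) ((k.factorial : ℕ) : ℤ_[p])
    (by linear_combination hvk)).mul hC0u
  obtain ⟨B, hB⟩ := hAu.exists_right_inv
  obtain ⟨F, hFdef⟩ : ∃ f : Polynomial ℤ_[p],
      f = ∏ j ∈ range k, (Polynomial.C (u + (j : ℤ_[p])) + Polynomial.X) := ⟨_, rfl⟩
  obtain ⟨G, hGdef⟩ : ∃ g : Polynomial ℤ_[p],
      g = ∏ j ∈ range k, (Polynomial.C ((j : ℤ_[p]) + 1) - Polynomial.X) := ⟨_, rfl⟩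
  have hF0 : F.coeff 0 = C₀ := by
    rw [Polynomial.coeff_zero_eq_eval_zero, hFdef, Polynomial.eval_prod, hC0def]
    simp
  have hG0 : G.coeff 0 = ((k.factorial : ℕ) : ℤ_[p]) := by
    rw [Polynomial.coeff_zero_eq_eval_zero, hGdef, Polynomial.eval_prod,
      ← Finset.prod_range_add_one_eq_factorial]
    push_cast
    simp
  obtain ⟨a₁, ha1⟩ : ∃ a : ℤ_[p], a = (F.coeff 1 - A * G.coeff 1) * B * vk := ⟨_, rfl⟩
  obtain ⟨a₂, ha2⟩ : ∃ a : ℤ_[p],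
      a = (F.coeff 2 - A * G.coeff 2 - A * a₁ * G.coeff 1) * B * vk := ⟨_, rfl⟩
  obtain ⟨a₃, ha3⟩ : ∃ a : ℤ_[p],
      a = (F.coeff 3 - A * G.coeff 3 - A * a₁ * G.coeff 2 - A * a₂ * G.coeff 1) * B * vk
      := ⟨_, rfl⟩
  obtain ⟨P, hPdef⟩ : ∃ q : Polynomial ℤ_[p], q = Polynomial.C 1 + Polynomial.C a₁ * Polynomial.X
      + Polynomial.C a₂ * Polynomial.X ^ 2 + Polynomial.C a₃ * Polynomial.X ^ 3 := ⟨_, rfl⟩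
  obtain ⟨H, hHdef⟩ : ∃ h : Polynomial ℤ_[p], h = F - Polynomial.C A * P * G := ⟨_, rfl⟩
  have hPG : ∀ m, (Polynomial.C A * P * G).coeff m
      = A * ∑ i ∈ range (m + 1), P.coeff i * G.coeff (m - i) := by
    intro m
    rw [mul_assoc, Polynomial.coeff_C_mul, Polynomial.coeff_mul,
      Finset.Nat.sum_antidiagonal_eq_sum_range_succ_mk]
  have hP0 : P.coeff 0 = 1 := by rw [hPdef]; simp [Polynomial.coeff_one]
  have hP1 : P.coeff 1 = a₁ := by rw [hPdef]; simp [Polynomial.coeff_one]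
  have hP2 : P.coeff 2 = a₂ := by rw [hPdef]; simp [Polynomial.coeff_one]
  have hP3 : P.coeff 3 = a₃ := by rw [hPdef]; simp [Polynomial.coeff_one]
  have hHc : ∀ d < 4, H.coeff d = 0 := by
    intro d hd
    interval_cases d
    · rw [hHdef, Polynomial.coeff_sub, hPG 0, Finset.sum_range_one, hP0, hF0, hG0]
      linear_combination (-((k.factorial : ℕ) : ℤ_[p])) * hAdef + (-C₀) * hvk
    · rw [hHdef, Polynomial.coeff_sub, hPG 1, Finset.sum_range_succ, Finset.sum_range_one,
        hP0, hP1, hG0, ha1]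
      norm_num
      linear_combination (-(F.coeff 1 - A * G.coeff 1)) * hB
        + (-(A * B * (F.coeff 1 - A * G.coeff 1))) * hvk
    · rw [hHdef, Polynomial.coeff_sub, hPG 2, Finset.sum_range_succ, Finset.sum_range_succ,
        Finset.sum_range_one, hP0, hP1, hP2, hG0, ha2]
      norm_num
      linear_combination (-(F.coeff 2 - A * G.coeff 2 - A * a₁ * G.coeff 1)) * hB
        + (-(A * B * (F.coeff 2 - A * G.coeff 2 - A * a₁ * G.coeff 1))) * hvk
    · rw [hHdef, Polynomial.coeff_sub, hPG 3, Finset.sum_range_succ, Finset.sum_range_succ,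
        Finset.sum_range_succ, Finset.sum_range_one, hP0, hP1, hP2, hP3, hG0, ha3]
      norm_num
      linear_combination (-(F.coeff 3 - A * G.coeff 3 - A * a₁ * G.coeff 2 - A * a₂ * G.coeff 1)) * hB
        + (-(A * B * (F.coeff 3 - A * G.coeff 3 - A * a₁ * G.coeff 2 - A * a₂ * G.coeff 1))) * hvk
  obtain ⟨Q, hQ⟩ := Polynomial.X_pow_dvd_iff.2 hHc
  refine ⟨a₁, a₂, a₃, ?_⟩
  rintro t ⟨s, rfl⟩
  obtain ⟨T, hT⟩ : ∃ T : ℤ_[p], T = (p : ℤ_[p]) * s := ⟨_, rfl⟩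
  have hTc : (T : ℚ_[p]) = (p : ℚ_[p]) * (s : ℚ_[p]) := by rw [hT]; push_cast; ring
  have hFe : F.eval T = ∏ j ∈ range k, (u + (j : ℤ_[p]) + T) := by
    rw [hFdef, Polynomial.eval_prod]; simp
  have hGe : G.eval T = ∏ j ∈ range k, ((j : ℤ_[p]) + 1 - T) := by
    rw [hGdef, Polynomial.eval_prod]; simp
  have hPe : P.eval T = 1 + a₁ * T + a₂ * T ^ 2 + a₃ * T ^ 3 := by
    rw [hPdef]; simp
  have hHe : H.eval T = F.eval T - A * (P.eval T * G.eval T) := by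
    rw [hHdef]; simp; ring
  have hHe2 : H.eval T = T ^ 4 * Q.eval T := by rw [hQ]; simp
  have hMain : F.eval T - A * (P.eval T * G.eval T) = (p : ℤ_[p]) ^ 4 * (s ^ 4 * Q.eval T) := by
    rw [← hHe, hHe2, hT]; ring
  have hGu : IsUnit (G.eval T) := by
    rw [hGe]
    refine Finset.prod_induction _ IsUnit (fun a b ha hb => ha.mul hb) isUnit_one ?_
    intro j hj
    apply isUnit_of_not_dvd
    intro hd
    have hd2 : (p : ℤ_[p]) ∣ ((j + 1 : ℕ) : ℤ_[p]) := by
      have h3 := dvd_add hd ⟨s, hT⟩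
      have e : ((j : ℤ_[p]) + 1 - T) + T = ((j + 1 : ℕ) : ℤ_[p]) := by push_cast; ring
      rwa [e] at h3
    have h4 := Nat.le_of_dvd (by omega) (pdvd_natCast hd2)
    have hjk := mem_range.1 hj
    omega
  obtain ⟨gi, hgi⟩ := hGu.exists_right_inv
  refine ⟨s ^ 4 * Q.eval T * gi, ?_⟩
  -- casts
  have hcast : ∀ f : ℕ → ℤ_[p],
      ((∏ j ∈ range k, f j : ℤ_[p]) : ℚ_[p]) = ∏ j ∈ range k, ((f j : ℚ_[p])) := fun f =>
    map_prod (PadicInt.Coe.ringHom) f (range k)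
  have hu' : (n : ℚ_[p]) * (u : ℚ_[p]) = 1 := by
    have h5 := congrArg (fun x : ℤ_[p] => (x : ℚ_[p])) hu
    push_cast at h5
    exact h5
  have hnne : (n : ℚ_[p]) ≠ 0 := left_ne_zero_of_mul_eq_one hu'
  have huc : (u : ℚ_[p]) = 1 / (n : ℚ_[p]) := by
    field_simp
    linear_combination hu'
  have hrf1 : rf (1 / (n : ℚ_[p]) + (p : ℚ_[p]) * (s : ℚ_[p])) k = ((F.eval T : ℤ_[p]) : ℚ_[p]) := by
    rw [hFe, hcast, rf]
    refine Finset.prod_congr rfl fun j hj => ?_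
    push_cast
    rw [huc, hTc]
    ring
  have hrf2 : rf (1 - (p : ℚ_[p]) * (s : ℚ_[p])) k = ((G.eval T : ℤ_[p]) : ℚ_[p]) := by
    rw [hGe, hcast, rf]
    refine Finset.prod_congr rfl fun j hj => ?_
    push_cast
    rw [hTc]
    ring
  have hrf3 : rf (1 / (n : ℚ_[p])) k = ((C₀ : ℤ_[p]) : ℚ_[p]) := by
    rw [hC0def, hcast, rf]
    refine Finset.prod_congr rfl fun j hj => ?_
    push_cast
    rw [huc]
  have hPec : (1 + (a₁ : ℚ_[p]) * ((p : ℚ_[p]) * s) + (a₂ : ℚ_[p]) * ((p : ℚ_[p]) * s) ^ 2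
      + (a₃ : ℚ_[p]) * ((p : ℚ_[p]) * s) ^ 3) = ((P.eval T : ℤ_[p]) : ℚ_[p]) := by
    have h6 := congrArg (fun x : ℤ_[p] => (x : ℚ_[p])) hPe
    push_cast at h6
    rw [hTc] at h6
    linear_combination -h6
  have hkne : (k.factorial : ℚ_[p]) ≠ 0 := Nat.cast_ne_zero.2 k.factorial_pos.ne'
  have hAkZ : A * ((k.factorial : ℕ) : ℤ_[p]) = C₀ := by
    rw [hAdef]; linear_combination C₀ * hvk
  have hAc : ((A : ℤ_[p]) : ℚ_[p]) * (k.factorial : ℚ_[p]) = ((C₀ : ℤ_[p]) : ℚ_[p]) := by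
    have h7 := congrArg (fun x : ℤ_[p] => (x : ℚ_[p])) hAkZ
    push_cast at h7
    exact h7
  have hAc2 : ((C₀ : ℤ_[p]) : ℚ_[p]) / (k.factorial : ℚ_[p]) = ((A : ℤ_[p]) : ℚ_[p]) := by
    field_simp
    linear_combination -hAc
  have hMainc : ((F.eval T : ℤ_[p]) : ℚ_[p])
      - (A : ℚ_[p]) * (((P.eval T : ℤ_[p]) : ℚ_[p]) * ((G.eval T : ℤ_[p]) : ℚ_[p]))
      = (p : ℚ_[p]) ^ 4 * ((s : ℚ_[p]) ^ 4 * ((Q.eval T : ℤ_[p]) : ℚ_[p])) := by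
    have h8 := congrArg (fun x : ℤ_[p] => (x : ℚ_[p])) hMain
    push_cast at h8
    exact h8
  have hgic : ((G.eval T : ℤ_[p]) : ℚ_[p]) * (gi : ℚ_[p]) = 1 := by
    have h9 := congrArg (fun x : ℤ_[p] => (x : ℚ_[p])) hgi
    push_cast at h9
    exact h9
  have hGne : ((G.eval T : ℤ_[p]) : ℚ_[p]) ≠ 0 := left_ne_zero_of_mul_eq_one hgic
  have hgiinv : (gi : ℚ_[p]) = (((G.eval T : ℤ_[p]) : ℚ_[p]))⁻¹ :=
    (inv_eq_of_mul_eq_one_right hgic).symm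
  rw [hrf1, hrf2, hrf3, hAc2, hPec]
  calc ((F.eval T : ℤ_[p]) : ℚ_[p]) / ((G.eval T : ℤ_[p]) : ℚ_[p])
      - (A : ℚ_[p]) * ((P.eval T : ℤ_[p]) : ℚ_[p])
      = (((F.eval T : ℤ_[p]) : ℚ_[p])
        - (A : ℚ_[p]) * (((P.eval T : ℤ_[p]) : ℚ_[p]) * ((G.eval T : ℤ_[p]) : ℚ_[p])))
        / ((G.eval T : ℤ_[p]) : ℚ_[p]) := by
        field_simp
    _ = ((p : ℚ_[p]) ^ 4 * ((s : ℚ_[p]) ^ 4 * ((Q.eval T : ℤ_[p]) : ℚ_[p])))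
        / ((G.eval T : ℤ_[p]) : ℚ_[p]) := by rw [hMainc]
    _ = (p : ℚ_[p]) ^ 4 * ((s : ℚ_[p]) ^ 4 * ((Q.eval T : ℤ_[p]) : ℚ_[p]) * (gi : ℚ_[p])) := by
        rw [div_eq_mul_inv, ← hgiinv]; ring
    _ = (p : ℚ_[p]) ^ 4 * ((s ^ 4 * Q.eval T * gi : ℤ_[p]) : ℚ_[p]) := by push_cast; ring
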